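/- If P = P₁ · P₂ and for every index function η' with nonzero coefficient in P₂ there exists a variable x such that x does not occur in P₁ (is a dummy variable of P₁) and η'(x) ≠ η(x), then the coefficient of x^η in P is zero. -/

import Mathlib

/-- If `P = P₁ · P₂` over an integral domain and for every index function `η'` with nonzero
coefficient in `P₂` there is a variable `x` that is a dummy variable of `P₁` (every monomial of
`P₁` with nonzero coefficient has exponent `0` on `x`) with `η'(x) ≠ η(x)`, then the coefficient
of `x^η` in `P` is zero. -/
theorem coeff_mul_eq_zero_of_dummy {X R : Type*} [Fintype X] [CommRing R] [IsDomain R]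
    (P P₁ P₂ : MvPolynomial X R) (η : X →₀ ℕ)
    (hP : P = P₁ * P₂)
    (h : ∀ η' : X →₀ ℕ, MvPolynomial.coeff η' P₂ ≠ 0 →
      ∃ x : X, (∀ σ : X →₀ ℕ, MvPolynomial.coeff σ P₁ ≠ 0 → σ x = 0) ∧ η' x ≠ η x) :
    MvPolynomial.coeff η P = 0 := by
  classical
  subst hP
  rw [MvPolynomial.coeff_mul]
  apply Finset.sum_eq_zero
  intro p hp
  rw [Finset.HasAntidiagonal.mem_antidiagonal] at hp
  by_contra hne
  rcases mul_ne_zero_iff.mp hne with ⟨h1, h2⟩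
  obtain ⟨x, hx1, hx2⟩ := h p.2 h2
  have := hx1 p.1 h1
  apply hx2
  have : (p.1 + p.2) x = η x := by rw [hp]
  simpa [hx1 p.1 h1] using this
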